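/- arXiv:2512.21086 — 5 statements merged into one kernel-verified Lean document; each statement's English description precedes it below -/
import Mathlib

section
/- Fix integers a ≥ 2 and b ≥ 0 with a + b ≥ 2, and let π be a permutation of size n that contains at least one pattern from Π(a−1,b+1). Then the set of associated (a−1)-values of the value underline-a in π is exactly the integer interval [underline-(a−1), underline-a − 1]; in particular this set of values forms an interval of integers. -/
/-- `f` picks out an occurrence of the pattern `ρ` in the permutation `π`. -/
def PermOcc {n m : ℕ} (π : Equiv.Perm (Fin n)) (ρ : Equiv.Perm (Fin m))
    (f : Fin m → Fin n) : Prop :=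
  StrictMono f ∧ ∀ j l : Fin m, π (f j) < π (f l) ↔ ρ j < ρ l

/-- `π` contains the pattern `ρ`. -/
def PermContains {n m : ℕ} (π : Equiv.Perm (Fin n)) (ρ : Equiv.Perm (Fin m)) : Prop :=
  ∃ f : Fin m → Fin n, PermOcc π ρ f

/-- The partial shuffle of size `m` with moved (1-indexed) value `a`:
the permutations of size `m`, other than the identity, in which the values
other than `a` appear in increasing order.  `Π(a,b)` is `partialShuffle (a+b) a`. -/
def partialShuffle (m a : ℕ) : Set (Equiv.Perm (Fin m)) :=
  {σ | σ ≠ 1 ∧ ∀ i j : Fin m, i < j → (σ i : ℕ) + 1 ≠ a → (σ j : ℕ) + 1 ≠ a → σ i < σ j}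

/-- The decreasing permutation `δ_k`. -/
def descPerm (k : ℕ) : Equiv.Perm (Fin k) := Fin.revPerm

/-- `σ_{a,b}` (with `m = a + b`): the identity permutation with the
values `a-1` and `a` transposed. -/
def sigmaPerm (m a : ℕ) (h2 : 2 ≤ a) (hm : a ≤ m) : Equiv.Perm (Fin m) :=
  Equiv.swap ⟨a - 2, by omega⟩ ⟨a - 1, by omega⟩

/-- The (1-indexed) value `v` of `π` acts as the `c`-element (i.e. corresponds to the
entry with 1-indexed value `c`) of an occurrence in `π` of some pattern from `P`. -/
def ActsAs {n m : ℕ} (π : Equiv.Perm (Fin n)) (P : Set (Equiv.Perm (Fin m)))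
    (c v : ℕ) : Prop :=
  ∃ ρ ∈ P, ∃ f : Fin m → Fin n, PermOcc π ρ f ∧
    ∃ j : Fin m, (ρ j : ℕ) + 1 = c ∧ (π (f j) : ℕ) + 1 = v

/-- `underline-a`: the smallest (1-indexed) value of `π` acting as the `a`-element of an
occurrence of a pattern from `Π(a-1, b+1)`. -/
noncomputable def underA (n a b : ℕ) (π : Equiv.Perm (Fin n)) : ℕ :=
  sInf {v | ActsAs π (partialShuffle (a + b) (a - 1)) a v}

/-- `q` is an associated `(a-1)`-value of `underline-a` in `π`. -/
def IsAssoc (n a b : ℕ) (π : Equiv.Perm (Fin n)) (q : ℕ) : Prop :=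
  ∃ ρ ∈ partialShuffle (a + b) (a - 1), ∃ f : Fin (a + b) → Fin n, PermOcc π ρ f ∧
    (∃ j : Fin (a + b), (ρ j : ℕ) + 1 = a ∧ (π (f j) : ℕ) + 1 = underA n a b π) ∧
    (∃ l : Fin (a + b), (ρ l : ℕ) + 1 = a - 1 ∧ (π (f l) : ℕ) + 1 = q)

/-- `underline-(a-1)`: the smallest associated `(a-1)`-value. -/
noncomputable def underA1 (n a b : ℕ) (π : Equiv.Perm (Fin n)) : ℕ :=
  sInf {q | IsAssoc n a b π q}

/-- The permutation of `Fin n` rotating the (0-indexed) interval `[x, y]`: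
`y ↦ x` and `v ↦ v + 1` for `x ≤ v < y`; all other elements are fixed. -/
def rotPerm (n x y : ℕ) : Equiv.Perm (Fin n) :=
  if h : x ≤ y ∧ y < n then
    { toFun := fun v =>
        if (v : ℕ) = y then ⟨x, by omega⟩
        else if hv : x ≤ (v : ℕ) ∧ (v : ℕ) < y then ⟨(v : ℕ) + 1, by omega⟩
        else v
      invFun := fun v =>
        if (v : ℕ) = x then ⟨y, by omega⟩
        else if hv : x < (v : ℕ) ∧ (v : ℕ) ≤ y then ⟨(v : ℕ) - 1, by omega⟩
        else v
      left_inv := by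
        intro v
        dsimp only
        split_ifs <;> apply Fin.ext <;> simp_all <;> omega
      right_inv := by
        intro v
        dsimp only
        split_ifs <;> apply Fin.ext <;> simp_all <;> omega }
  else 1

/-- The map `S` (depending on the parameters `a`, `b`): if `π` contains a pattern from
`Π(a-1, b+1)`, the values in the 1-indexed interval `[underline-(a-1), underline-a - 1]`
are increased by `1` and the value `underline-a` is replaced by `underline-(a-1)`;
otherwise `π` is fixed. -/
noncomputable def Smap (n a b : ℕ) (π : Equiv.Perm (Fin n)) : Equiv.Perm (Fin n) :=
  open Classical in
  if ∃ ρ ∈ partialShuffle (a + b) (a - 1), PermContains π ρ then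
    rotPerm n (underA1 n a b π - 1) (underA n a b π - 1) * π
  else π


/-- A strictly monotone permutation of `Fin m` is the identity. -/
lemma perm_eq_one_of_strictMono {m : ℕ} (ρ : Equiv.Perm (Fin m)) (h : StrictMono ρ) :
    ρ = 1 := by
  have h2 : (StrictMono.orderIsoOfSurjective ρ h ρ.surjective) = OrderIso.refl (Fin m) :=
    Subsingleton.elim _ _
  ext i
  have h3 := congrArg (fun e => (e : Fin m ≃o Fin m) i) h2
  have h4 : (StrictMono.orderIsoOfSurjective ρ h ρ.surjective) i = ρ i := rfl
  simp only [OrderIso.refl_apply] at h3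
  rw [h4] at h3
  simp [h3]

/-- A non-identity permutation has an inversion. -/
lemma exists_inversion {m : ℕ} (ρ : Equiv.Perm (Fin m)) (h : ρ ≠ 1) :
    ∃ i j : Fin m, i < j ∧ ρ j < ρ i := by
  by_contra hc
  push_neg at hc
  refine h (perm_eq_one_of_strictMono ρ ?_)
  intro i j hij
  rcases lt_trichotomy (ρ i) (ρ j) with h1 | h1 | h1
  · exact h1
  · exact absurd (ρ.injective h1) hij.ne
  · exact absurd h1 (not_lt.2 (hc i j hij))

lemma card_filter_perm_lt {m : ℕ} (ρ : Equiv.Perm (Fin m)) (c : Fin m) :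
    (Finset.univ.filter fun i => ρ i < c).card = (c : ℕ) := by
  have h : (Finset.univ.filter fun i => ρ i < c) = Finset.image ρ.symm (Finset.Iio c) := by
    ext x
    simp only [Finset.mem_filter, Finset.mem_univ, true_and, Finset.mem_image,
      Finset.mem_Iio]
    constructor
    · intro hx; exact ⟨ρ x, hx, by simp⟩
    · rintro ⟨y, hy, rfl⟩; simpa using hy
  rw [h, Finset.card_image_of_injective _ ρ.symm.injective, Fin.card_Iio]

lemma occ_of_finset {n m : ℕ} (π : Equiv.Perm (Fin n)) (T : Finset (Fin n))
    (hT : T.card = m) :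
    ∃ (ρ : Equiv.Perm (Fin m)) (f : Fin m → Fin n), PermOcc π ρ f ∧
      (∀ i, f i ∈ T) ∧ (∀ x ∈ T, ∃ i, f i = x) ∧
      (∀ i, (ρ i : ℕ) = (T.filter fun y => π y < π (f i)).card) := by
  classical
  set e := T.orderIsoOfFin hT with he
  set f : Fin m → Fin n := fun i => (e i : Fin n) with hfdef
  have hf : StrictMono f := fun i j hij => e.strictMono hij
  have hmem : ∀ i, f i ∈ T := fun i => (e i).2
  have hcard : ∀ i, (T.filter fun y => π y < π (f i)).card < m := by
    intro i
    rw [← hT]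
    refine Finset.card_lt_card ⟨Finset.filter_subset _ _, fun hsub => ?_⟩
    have := hsub (hmem i)
    simp at this
  set r : Fin m → Fin m := fun i => ⟨(T.filter fun y => π y < π (f i)).card, hcard i⟩
    with hrdef
  have key : ∀ i j : Fin m, π (f i) < π (f j) → r i < r j := by
    intro i j hij
    have hsub : (T.filter fun y => π y < π (f i)) ⊆ (T.filter fun y => π y < π (f j)) := by
      intro y hy
      simp only [Finset.mem_filter] at hy ⊢
      exact ⟨hy.1, hy.2.trans hij⟩
    have hssub : (T.filter fun y => π y < π (f i)) ⊂ (T.filter fun y => π y < π (f j)) := by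
      refine ⟨hsub, fun hsub2 => ?_⟩
      have h3 : f i ∈ (T.filter fun y => π y < π (f j)) := by
        simp only [Finset.mem_filter]; exact ⟨hmem i, hij⟩
      have := hsub2 h3
      simp at this
    exact Finset.card_lt_card hssub
  have rinj : Function.Injective r := by
    intro i j hij
    rcases lt_trichotomy (π (f i)) (π (f j)) with h1 | h1 | h1
    · exact absurd hij (key i j h1).ne
    · exact hf.injective (π.injective h1)
    · exact absurd hij.symm (key j i h1).ne
  set ρ : Equiv.Perm (Fin m) := Equiv.ofBijective r (Finite.injective_iff_bijective.mp rinj)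
    with hρdef
  have hρr : ∀ i, ρ i = r i := fun i => rfl
  refine ⟨ρ, f, ⟨hf, fun j l => ?_⟩, hmem, fun x hx => ⟨e.symm ⟨x, hx⟩, by simp [hfdef]⟩,
    fun i => rfl⟩
  constructor
  · intro h1; exact key j l h1
  · intro h1
    rcases lt_trichotomy (π (f j)) (π (f l)) with h2 | h2 | h2
    · exact h2
    · rw [hρr, hρr] at h1
      exact absurd (congrArg r (hf.injective (π.injective h2))) h1.ne
    · exact absurd (h1.trans (key l j h2)) (lt_irrefl _)

theorem assoc_values_form_interval (a b n : ℕ) (ha : 2 ≤ a) (π : Equiv.Perm (Fin n))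
    (h : ∃ ρ ∈ partialShuffle (a + b) (a - 1), PermContains π ρ) :
    {q : ℕ | IsAssoc n a b π q} = Set.Icc (underA1 n a b π) (underA n a b π - 1) := by
  classical
  have hm : a - 1 < a + b := by omega
  have hm2 : a - 2 < a + b := by omega
  -- the set of values acting as the `a`-element is nonempty
  obtain ⟨ρ0, hρ0, f0, hocc0⟩ := h
  have hAne : {v | ActsAs π (partialShuffle (a + b) (a - 1)) a v}.Nonempty := by
    refine ⟨(π (f0 (ρ0⁻¹ ⟨a - 1, hm⟩)) : ℕ) + 1,
      ρ0, hρ0, f0, hocc0, ρ0⁻¹ ⟨a - 1, hm⟩, ?_, rfl⟩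
    rw [Equiv.Perm.inv_def, Equiv.apply_symm_apply]
    simp only [Fin.val_mk]
    omega
  have hAmem : ActsAs π (partialShuffle (a + b) (a - 1)) a (underA n a b π) :=
    Nat.sInf_mem hAne
  obtain ⟨ρ1, hρ1, f1, hocc1, j1, hj1v, hj1π⟩ := hAmem
  have hQne : {q | IsAssoc n a b π q}.Nonempty := by
    refine ⟨(π (f1 (ρ1⁻¹ ⟨a - 2, hm2⟩)) : ℕ) + 1,
      ρ1, hρ1, f1, hocc1, ⟨j1, hj1v, hj1π⟩, ⟨ρ1⁻¹ ⟨a - 2, hm2⟩, ?_, rfl⟩⟩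
    rw [Equiv.Perm.inv_def, Equiv.apply_symm_apply]
    simp only [Fin.val_mk]
    omega
  have hQmem : IsAssoc n a b π (underA1 n a b π) := Nat.sInf_mem hQne
  obtain ⟨ρ, hrho, f, hocc, ⟨j0, hj0v, hj0π⟩, ⟨l0, hl0v, hl0π⟩⟩ := hQmem
  have hfmono : StrictMono f := hocc.1
  have hfinj : Function.Injective f := hfmono.injective
  have hj0l0 : j0 ≠ l0 := by
    intro he
    rw [he] at hj0v
    omega
  ext q
  simp only [Set.mem_setOf_eq, Set.mem_Icc]
  constructor
  · -- easy direction
    intro hq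
    refine ⟨Nat.sInf_le hq, ?_⟩
    obtain ⟨ρ2, hρ2, f2, hocc2, ⟨j2, hj2v, hj2π⟩, ⟨l2, hl2v, hl2π⟩⟩ := hq
    have h1 : ρ2 l2 < ρ2 j2 := by
      rw [Fin.lt_def]; omega
    have h2 : π (f2 l2) < π (f2 j2) := (hocc2.2 l2 j2).2 h1
    rw [Fin.lt_def] at h2
    omega
  · rintro ⟨hq1, hq2⟩
    by_cases hq0 : q = underA1 n a b π
    · subst hq0
      exact Nat.sInf_mem hQne
    have hq3 : underA1 n a b π < q := lt_of_le_of_ne hq1 (Ne.symm hq0)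
    have hw : (π (f l0) : ℕ) + 1 = underA1 n a b π := hl0π
    have hu : (π (f j0) : ℕ) + 1 = underA n a b π := hj0π
    have hq4 : q < underA n a b π := by omega
    have htn : q - 1 < n := by
      have := (π (f j0)).isLt
      omega
    set tf : Fin n := ⟨q - 1, htn⟩ with htf
    set p : Fin n := π.symm tf with hpdef
    have hπp : π p = tf := π.apply_symm_apply tf
    have hπpv : (π p : ℕ) = q - 1 := by rw [hπp]
    have hwt : (π (f l0) : ℕ) < q - 1 := by omega
    have htu : q - 1 < (π (f j0) : ℕ) := by omega
    -- position comparison reflects index comparison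
    have hflt : ∀ i1 j1 : Fin (a + b), f i1 < f j1 → i1 < j1 := fun i1 j1 =>
      hfmono.lt_iff_lt.1
    -- values of entries other than `l0` avoid the open interval around `tf`
    have hF1 : ∀ i : Fin (a + b), i ≠ l0 →
        ((π (f i) : ℕ) < (π (f l0) : ℕ) ∨ (π (f j0) : ℕ) ≤ (π (f i) : ℕ)) := by
      intro i hi
      rcases lt_trichotomy (ρ i) (ρ l0) with h1 | h1 | h1
      · left
        have := (hocc.2 i l0).2 h1
        rwa [Fin.lt_def] at this
      · exact absurd (ρ.injective h1) hi
      · right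
        have h2 : ¬ π (f i) < π (f j0) := by
          intro hlt
          have h3 := (hocc.2 i j0).1 hlt
          rw [Fin.lt_def] at h1 h3
          omega
        have := not_lt.1 h2
        rwa [Fin.le_def] at this
    have hpne : ∀ i : Fin (a + b), π p ≠ π (f i) := by
      intro i
      by_cases hi : i = l0
      · subst hi
        intro he
        rw [← he] at hwt
        omega
      · rcases hF1 i hi with h1 | h1 <;>
        · intro he
          rw [← he, hπpv] at h1
          omega
    have hpnotin : p ∉ Finset.univ.image f := by
      rw [Finset.mem_image]
      rintro ⟨i, -, he⟩
      exact hpne i (congrArg π he).symm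
    have hpnef : ∀ i : Fin (a + b), p ≠ f i := by
      intro i he
      exact hpne i (congrArg π he)
    have hcimg : (Finset.univ.image f).card = a + b := by
      rw [Finset.card_image_of_injective _ hfinj, Finset.card_univ, Fintype.card_fin]
    -- rank computation over the image of `f`
    have himgfilter : ∀ v : Fin n, ((Finset.univ.image f).filter fun y => π y < v)
        = Finset.image f (Finset.univ.filter fun i => π (f i) < v) := by
      intro v
      ext x
      simp only [Finset.mem_filter, Finset.mem_image, Finset.mem_univ, true_and]
      constructor
      · rintro ⟨⟨i, rfl⟩, hx⟩
        exact ⟨i, hx, rfl⟩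
      · rintro ⟨i, hx, rfl⟩
        exact ⟨⟨i, rfl⟩, hx⟩
    have hfiltc : ∀ (v : Fin n) (c : Fin (a + b)), (∀ i, π (f i) < v ↔ ρ i < c) →
        ((Finset.univ.image f).filter fun y => π y < v).card = (c : ℕ) := by
      intro v c hvc
      rw [himgfilter, Finset.card_image_of_injective _ hfinj]
      rw [show (Finset.univ.filter fun i => π (f i) < v)
          = (Finset.univ.filter fun i => ρ i < c) from by
        ext i; simp only [Finset.mem_filter, Finset.mem_univ, true_and, hvc i]]
      exact card_filter_perm_lt ρ c
    have hBcard : ((Finset.univ.image f).filter fun y => π y < tf).card = a - 1 := by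
      refine hfiltc tf ⟨a - 1, hm⟩ fun i => ?_
      constructor
      · intro h1
        rw [Fin.lt_def] at h1 ⊢
        simp only [Fin.val_mk] at h1 ⊢
        by_contra h2
        push_neg at h2
        have h3 : ¬ π (f i) < π (f j0) := by
          intro hlt
          have h4 := (hocc.2 i j0).1 hlt
          rw [Fin.lt_def] at h4
          omega
        rw [not_lt, Fin.le_def] at h3
        omega
      · intro h1
        rw [Fin.lt_def] at h1 ⊢
        simp only [Fin.val_mk] at h1 ⊢
        by_cases hi : i = l0
        · subst hi; omega
        · rcases hF1 i hi with h2 | h2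
          · omega
          · exfalso
            have h3 : ¬ π (f i) < π (f j0) := by
              rw [not_lt, Fin.le_def]; omega
            have h4 : ρ i < ρ j0 := by rw [Fin.lt_def]; omega
            exact h3 ((hocc.2 i j0).2 h4)
    have hAcard : ∀ i1 : Fin (a + b),
        ((Finset.univ.image f).filter fun y => π y < π (f i1)).card = (ρ i1 : ℕ) :=
      fun i1 => hfiltc _ (ρ i1) fun i2 => hocc.2 i2 i1
    -- generic filter-card formula over "image minus one entry plus p"
    have hTfilter : ∀ (l : Fin (a + b)) (v : Fin n),
        (((insert p ((Finset.univ.image f).erase (f l))).filter fun y => π y < v).card : ℕ)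
        = ((Finset.univ.image f).filter fun y => π y < v).card
          - (if π (f l) < v then 1 else 0) + (if π p < v then 1 else 0) := by
      intro l v
      have e1 : ((((Finset.univ.image f).erase (f l)).filter fun y => π y < v).card : ℕ)
          = ((Finset.univ.image f).filter fun y => π y < v).card
            - (if π (f l) < v then 1 else 0) := by
        rw [Finset.filter_erase]
        split_ifs with h1
        · have hmem4 : f l ∈ (Finset.univ.image f).filter fun y => π y < v :=
            Finset.mem_filter.2 ⟨Finset.mem_image.2 ⟨l, Finset.mem_univ _, rfl⟩, h1⟩
          rw [Finset.card_erase_of_mem hmem4]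
        · have hnm : f l ∉ (Finset.univ.image f).filter fun y => π y < v :=
            fun hm3 => h1 (Finset.mem_filter.1 hm3).2
          rw [Finset.erase_eq_of_notMem hnm]
          simp
      rw [Finset.filter_insert]
      have hnm2 : p ∉ (((Finset.univ.image f).erase (f l)).filter fun y => π y < v) :=
        fun hm3 => hpnotin (Finset.erase_subset _ _ (Finset.filter_subset _ _ hm3))
      by_cases h2 : π p < v
      · rw [if_pos h2, Finset.card_insert_of_notMem hnm2, e1, if_pos h2]
      · rw [if_neg h2, e1, if_neg h2]
        omega
    -- the modified occurrence: replace the `(a-1)`-element by the entry of value `q`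
    set T1 : Finset (Fin n) := insert p ((Finset.univ.image f).erase (f l0)) with hT1def
    have hT1card : T1.card = a + b := by
      rw [hT1def, Finset.card_insert_of_notMem fun hm3 =>
        hpnotin (Finset.erase_subset _ _ hm3),
        Finset.card_erase_of_mem (Finset.mem_image.2 ⟨l0, Finset.mem_univ _, rfl⟩), hcimg]
      omega
    obtain ⟨ρ', f', hocc', hmem', hsurj', hrank'⟩ := occ_of_finset π T1 hT1card
    have hpT1 : p ∈ T1 := by rw [hT1def]; exact Finset.mem_insert_self _ _
    have hfT1 : ∀ i1 : Fin (a + b), i1 ≠ l0 → f i1 ∈ T1 := by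
      intro i1 hne
      rw [hT1def]
      exact Finset.mem_insert_of_mem (Finset.mem_erase.2
        ⟨fun he => hne (hfinj he), Finset.mem_image.2 ⟨i1, Finset.mem_univ _, rfl⟩⟩)
    have hT1mem : ∀ x ∈ T1, x = p ∨ ∃ i1, i1 ≠ l0 ∧ x = f i1 := by
      intro x hx
      rw [hT1def] at hx
      rcases Finset.mem_insert.1 hx with h1 | h1
      · exact Or.inl h1
      · right
        have hne := Finset.ne_of_mem_erase h1
        obtain ⟨i1, -, rfl⟩ := Finset.mem_image.1 (Finset.mem_of_mem_erase h1)
        exact ⟨i1, fun he => hne (by rw [he]), rfl⟩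
    have hc1 : π (f l0) < tf := by
      rw [Fin.lt_def]
      exact hwt
    have hc2 : ¬ π p < tf := by
      rw [hπp]
      exact lt_irrefl _
    have hrank_p : ∀ i, f' i = p → (ρ' i : ℕ) = a - 2 := by
      intro i hi
      rw [hrank' i, hi, hπp, hT1def, hTfilter l0 tf, hBcard, if_pos hc1, if_neg hc2]
      omega
    have hrank_f : ∀ i i1, i1 ≠ l0 → f' i = f i1 → (ρ' i : ℕ) = (ρ i1 : ℕ) := by
      intro i i1 hne hi
      rw [hrank' i, hi, hT1def, hTfilter l0 (π (f i1)), hAcard i1]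
      rcases hF1 i1 hne with h1 | h1
      · have d1 : ¬ π (f l0) < π (f i1) := by rw [Fin.lt_def]; omega
        have d2 : ¬ π p < π (f i1) := by rw [Fin.lt_def, hπpv]; omega
        rw [if_neg d1, if_neg d2]
        omega
      · have d1 : π (f l0) < π (f i1) := by rw [Fin.lt_def]; omega
        have d2 : π p < π (f i1) := by rw [Fin.lt_def, hπpv]; omega
        have d3 : ¬ ρ i1 < ρ j0 := by
          intro hlt
          have d4 := (hocc.2 i1 j0).2 hlt
          rw [Fin.lt_def] at d4
          omega
        rw [Fin.lt_def] at d3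
        rw [if_pos d1, if_pos d2]
        omega
    by_cases hid : ρ' = 1
    · -- the new pattern is the identity: contradiction with minimality of `underline-a`
      exfalso
      have hT1incr : ∀ x ∈ T1, ∀ y ∈ T1, x < y → π x < π y := by
        intro x hx y hy hxy
        obtain ⟨i, rfl⟩ := hsurj' x hx
        obtain ⟨j, rfl⟩ := hsurj' y hy
        have hij : i < j := hocc'.1.lt_iff_lt.1 hxy
        refine (hocc'.2 i j).2 ?_
        rw [hid]
        simpa using hij
      have hpj0 : p < f j0 := by
        have h1 : π p < π (f j0) := by
          rw [Fin.lt_def, hπpv]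
          exact htu
        rcases lt_trichotomy p (f j0) with h2 | h2 | h2
        · exact h2
        · exact absurd (congrArg π h2) (hpne j0)
        · exact absurd (hT1incr _ (hfT1 j0 hj0l0) _ hpT1 h2) (not_lt.2 h1.le)
      set T2 : Finset (Fin n) := insert p ((Finset.univ.image f).erase (f j0)) with hT2def
      have hT2card : T2.card = a + b := by
        rw [hT2def, Finset.card_insert_of_notMem fun hm3 =>
          hpnotin (Finset.erase_subset _ _ hm3),
          Finset.card_erase_of_mem (Finset.mem_image.2 ⟨j0, Finset.mem_univ _, rfl⟩), hcimg]
        omega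
      obtain ⟨ρ'', f'', hocc'', hmem'', hsurj'', hrank''⟩ := occ_of_finset π T2 hT2card
      have hpT2 : p ∈ T2 := by rw [hT2def]; exact Finset.mem_insert_self _ _
      have hl0j0 : l0 ≠ j0 := fun he => hj0l0 he.symm
      have hfT2 : ∀ i1 : Fin (a + b), i1 ≠ j0 → f i1 ∈ T2 := by
        intro i1 hne
        rw [hT2def]
        exact Finset.mem_insert_of_mem (Finset.mem_erase.2
          ⟨fun he => hne (hfinj he), Finset.mem_image.2 ⟨i1, Finset.mem_univ _, rfl⟩⟩)
      have hT2mem : ∀ x ∈ T2, x = p ∨ ∃ i1, i1 ≠ j0 ∧ x = f i1 := by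
        intro x hx
        rw [hT2def] at hx
        rcases Finset.mem_insert.1 hx with h1 | h1
        · exact Or.inl h1
        · right
          have hne := Finset.ne_of_mem_erase h1
          obtain ⟨i1, -, rfl⟩ := Finset.mem_image.1 (Finset.mem_of_mem_erase h1)
          exact ⟨i1, fun he => hne (by rw [he]), rfl⟩
      have hrank2_p : ∀ i, f'' i = p → (ρ'' i : ℕ) = a - 1 := by
        intro i hi
        have d1 : ¬ π (f j0) < tf := by rw [Fin.lt_def]; omega
        rw [hrank'' i, hi, hπp, hT2def, hTfilter j0 tf, hBcard, if_neg d1, if_neg hc2]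
        omega
      have hrank2_f : ∀ i i1, i1 ≠ j0 → f'' i = f i1 → (ρ'' i : ℕ) = (ρ i1 : ℕ) := by
        intro i i1 hne hi
        rw [hrank'' i, hi, hT2def, hTfilter j0 (π (f i1)), hAcard i1]
        by_cases hil0 : i1 = l0
        · subst hil0
          have d1 : ¬ π (f j0) < π (f i1) := by rw [Fin.lt_def]; omega
          have d2 : ¬ π p < π (f i1) := by rw [Fin.lt_def, hπpv]; omega
          rw [if_neg d1, if_neg d2]
          omega
        · rcases hF1 i1 hil0 with h1 | h1
          · have d1 : ¬ π (f j0) < π (f i1) := by rw [Fin.lt_def]; omega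
            have d2 : ¬ π p < π (f i1) := by rw [Fin.lt_def, hπpv]; omega
            rw [if_neg d1, if_neg d2]
            omega
          · have hvne : (π (f i1) : ℕ) ≠ (π (f j0) : ℕ) := by
              intro he
              exact hne (hfinj (π.injective (Fin.ext he)))
            have d1 : π (f j0) < π (f i1) := by rw [Fin.lt_def]; omega
            have d2 : π p < π (f i1) := by rw [Fin.lt_def, hπpv]; omega
            have d3 : ρ j0 < ρ i1 := (hocc.2 j0 i1).1 d1
            rw [Fin.lt_def] at d3
            rw [if_pos d1, if_pos d2]
            omega
      have hnotid : ρ'' ≠ 1 := by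
        obtain ⟨i, j, hij, hinv⟩ := exists_inversion ρ hrho.1
        have hviol : ∃ x ∈ T2, ∃ y ∈ T2, x < y ∧ π y < π x := by
          by_cases hila : i = l0
          · subst hila
            have hjj0 : j ≠ j0 := by
              intro he
              rw [he, Fin.lt_def] at hinv
              omega
            exact ⟨f i, hfT2 i (fun he => hl0j0 he), f j, hfT2 j hjj0,
              hfmono hij, (hocc.2 j i).2 hinv⟩
          · by_cases hjl0 : j = l0
            · subst hjl0
              by_cases hij0 : i = j0
              · subst hij0
                refine ⟨p, hpT2, f j, hfT2 j hl0j0, hpj0.trans (hfmono hij), ?_⟩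
                rw [Fin.lt_def, hπpv]
                exact hwt
              · exact ⟨f i, hfT2 i hij0, f j, hfT2 j hl0j0,
                  hfmono hij, (hocc.2 j i).2 hinv⟩
            · exfalso
              have hv1 : (ρ i : ℕ) + 1 ≠ a - 1 := by
                intro he
                exact hila (ρ.injective (Fin.ext (by omega)))
              have hv2 : (ρ j : ℕ) + 1 ≠ a - 1 := by
                intro he
                exact hjl0 (ρ.injective (Fin.ext (by omega)))
              exact absurd (hrho.2 i j hij hv1 hv2) (not_lt.2 hinv.le)
        obtain ⟨x, hx, y, hy, hxy, hπxy⟩ := hviol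
        intro he
        obtain ⟨i'', rfl⟩ := hsurj'' x hx
        obtain ⟨j'', rfl⟩ := hsurj'' y hy
        have hij'' : i'' < j'' := hocc''.1.lt_iff_lt.1 hxy
        have h6 := (hocc''.2 j'' i'').1 hπxy
        rw [he] at h6
        simp only [Equiv.Perm.one_apply] at h6
        exact absurd h6 (not_lt.2 hij''.le)
      have hrho2 : ρ'' ∈ partialShuffle (a + b) (a - 1) := by
        refine ⟨hnotid, ?_⟩
        intro i j hij hvi hvj
        have hmemT1 : ∀ k, (ρ'' k : ℕ) + 1 ≠ a - 1 → f'' k ∈ T1 := by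
          intro k hvk
          rcases hT2mem (f'' k) (hmem'' k) with h1 | ⟨i1, hi1, h1⟩
          · rw [h1]; exact hpT1
          · rw [h1]
            refine hfT1 i1 fun he => ?_
            subst he
            rw [hrank2_f k i1 hi1 h1] at hvk
            exact hvk hl0v
        exact (hocc''.2 i j).1
          (hT1incr _ (hmemT1 i hvi) _ (hmemT1 j hvj) (hocc''.1 hij))
      obtain ⟨jj, hjj⟩ := hsurj'' p hpT2
      have hacts : ActsAs π (partialShuffle (a + b) (a - 1)) a q :=
        ⟨ρ'', hrho2, f'', hocc'', jj, by have := hrank2_p jj hjj; omega,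
          by rw [hjj, hπpv]; omega⟩
      have h9 : underA n a b π ≤ q := Nat.sInf_le hacts
      exact absurd h9 (not_le.2 hq4)
    · -- the new pattern is not the identity: `q` is an associated value
      have hrho1 : ρ' ∈ partialShuffle (a + b) (a - 1) := by
        refine ⟨hid, ?_⟩
        intro i j hij hvi hvj
        rcases hT1mem (f' i) (hmem' i) with h1 | ⟨i1, hi1, h1⟩
        · exact absurd (by rw [hrank_p i h1]; omega) hvi
        rcases hT1mem (f' j) (hmem' j) with h2 | ⟨j1, hj1, h2⟩
        · exact absurd (by rw [hrank_p j h2]; omega) hvj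
        have hposs : f i1 < f j1 := by
          rw [← h1, ← h2]
          exact hocc'.1 hij
        have hij1 : i1 < j1 := hflt _ _ hposs
        have hv1 : (ρ i1 : ℕ) + 1 ≠ a - 1 := by
          rw [← hrank_f i i1 hi1 h1]
          exact hvi
        have hv2 : (ρ j1 : ℕ) + 1 ≠ a - 1 := by
          rw [← hrank_f j j1 hj1 h2]
          exact hvj
        refine (hocc'.2 i j).1 ?_
        rw [h1, h2]
        exact (hocc.2 i1 j1).2 (hrho.2 i1 j1 hij1 hv1 hv2)
      obtain ⟨jj, hjj⟩ := hsurj' (f j0) (hfT1 j0 hj0l0)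
      obtain ⟨ll, hll⟩ := hsurj' p hpT1
      refine ⟨ρ', hrho1, f', hocc', ⟨jj, ?_, ?_⟩, ⟨ll, ?_, ?_⟩⟩
      · have := hrank_f jj j0 hj0l0 hjj
        omega
      · rw [hjj]
        exact hj0π
      · have := hrank_p ll hll
        omega
      · rw [hll]
        omega
end

section
/- Fix integers a ≥ 2, b ≥ 0 with a + b ≥ 2, and m ≥ 1. If a permutation π of size n avoids the permutation σ_{a,b} and avoids the decreasing permutation δ_{m+1}, then S(π) avoids δ_{m+1}. -/
/-- distilled witness predicate -/
def GoodW (n a b : ℕ) (π : Equiv.Perm (Fin n)) (W : Fin (a+b) → Fin n) : Prop :=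
  (∀ r r' : Fin (a+b), π (W r) < π (W r') ↔ r < r') ∧
  (∀ r r' : Fin (a+b), (r : ℕ) ≠ a - 2 → (r' : ℕ) ≠ a - 2 → r < r' → W r < W r') ∧
  ¬ StrictMono W

lemma perm_strictMono_eq_one {N : ℕ} (g : Equiv.Perm (Fin N)) (hg : StrictMono g) : g = 1 := by
  have := (StrictMono.range_inj hg (strictMono_id (α := Fin N))).1
    (by rw [g.surjective.range_eq, Set.range_id])
  ext x
  simp [this]

lemma GoodW_inj {n a b : ℕ} {π : Equiv.Perm (Fin n)} {W : Fin (a+b) → Fin n}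
    (hW : GoodW n a b π W) : Function.Injective W := by
  intro r r' h
  by_contra hne
  rcases lt_or_gt_of_ne hne with hlt | hlt
  · exact absurd ((hW.1 r r').2 hlt) (by rw [h]; exact lt_irrefl _)
  · exact absurd ((hW.1 r' r).2 hlt) (by rw [h]; exact lt_irrefl _)

/-- from an occurrence of a shuffle pattern to a distilled witness -/
lemma fromOcc {n a b : ℕ} (ha : 2 ≤ a) {π : Equiv.Perm (Fin n)}
    {ρ : Equiv.Perm (Fin (a+b))} (hρ : ρ ∈ partialShuffle (a+b) (a-1))
    {f : Fin (a+b) → Fin n} (hf : PermOcc π ρ f) :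
    GoodW n a b π (fun r => f (ρ.symm r)) := by
  obtain ⟨hmono, hiff⟩ := hf
  refine ⟨fun r r' => ?_, fun r r' hr hr' hlt => ?_, fun hsm => ?_⟩
  · rw [hiff]; simp
  · rcases lt_trichotomy (ρ.symm r) (ρ.symm r') with h | h | h
    · exact hmono h
    · exact absurd (ρ.symm.injective h) (by intro hh; rw [hh] at hlt; exact lt_irrefl _ hlt)
    · exfalso
      have := hρ.2 (ρ.symm r') (ρ.symm r) h
        (by simpa using fun hc => hr' (by omega)) (by simpa using fun hc => hr (by omega))
      simp only [Equiv.apply_symm_apply] at this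
      exact absurd hlt (not_lt.2 this.le)
  · apply hρ.1
    have hsymm : StrictMono (⇑ρ.symm) := by
      intro i j hij
      have h2 : f (ρ.symm i) < f (ρ.symm j) := hsm hij
      rcases lt_trichotomy (ρ.symm i) (ρ.symm j) with h | h | h
      · exact h
      · exact absurd h2 (by rw [h]; exact lt_irrefl _)
      · exact absurd (hmono h) (not_lt.2 h2.le)
    have h1 : ρ.symm = 1 := perm_strictMono_eq_one ρ.symm hsymm
    have : ρ = (ρ.symm).symm := rfl
    rw [this, h1]
    rfl

/-- from a distilled witness back to an occurrence -/
lemma toOcc {n a b : ℕ} (ha : 2 ≤ a) {π : Equiv.Perm (Fin n)}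
    {W : Fin (a+b) → Fin n} (hW : GoodW n a b π W) :
    ∃ ρ ∈ partialShuffle (a+b) (a-1), ∃ f : Fin (a+b) → Fin n, PermOcc π ρ f ∧
      (∃ j, (ρ j : ℕ) + 1 = a ∧ f j = W ⟨a-1, by omega⟩) ∧
      (∃ l, (ρ l : ℕ) + 1 = a - 1 ∧ f l = W ⟨a-2, by omega⟩) := by
  classical
  set s := Tuple.sort W with hs
  have hinj : Function.Injective W := GoodW_inj hW
  have hmono : Monotone (W ∘ s) := Tuple.monotone_sort W
  have hfsm : StrictMono (W ∘ ⇑s) := hmono.strictMono_of_injective (hinj.comp s.injective)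
  refine ⟨s, ⟨?_, ?_⟩, W ∘ s, ⟨hfsm, fun j l => ?_⟩, ⟨s.symm ⟨a-1, by omega⟩, ?_, ?_⟩,
    ⟨s.symm ⟨a-2, by omega⟩, ?_, ?_⟩⟩
  · intro h1
    apply hW.2.2
    have : W = W ∘ ⇑s := by
      funext r; rw [h1]; rfl
    rw [this]; exact hfsm
  · intro i j hij hi hj
    have h2 : W (s i) < W (s j) := hfsm hij
    rcases lt_trichotomy (s i) (s j) with h | h | h
    · exact h
    · exact absurd (s.injective h) (by omega)
    · exact absurd (hW.2.1 (s j) (s i) (by omega) (by omega) h) (not_lt.2 h2.le)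
  · exact hW.1 (s j) (s l)
  · simp only [Equiv.apply_symm_apply]; omega
  · simp only [Function.comp_apply, Equiv.apply_symm_apply]
  · simp only [Equiv.apply_symm_apply]; omega
  · simp only [Function.comp_apply, Equiv.apply_symm_apply]

/-- γ-config: replace the displaced (rank a-1) entry by `d` (placed after `p`). -/
lemma updateD_good {n a b : ℕ} {π : Equiv.Perm (Fin n)}
    {W : Fin (a+b) → Fin n} (hW : GoodW n a b π W) {d : Fin n}
    {D Da : Fin (a+b)} (hD : (D : ℕ) = a - 2) (hDa : (Da : ℕ) = a - 1) (ha : 2 ≤ a)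
    (hpd : W Da < d)
    (hsm : ∀ r : Fin (a+b), r < D → π (W r) < π d)
    (hdx : π d < π (W D)) :
    GoodW n a b π (Function.update W D d) := by
  have hDDa : D < Da := by rw [Fin.lt_def, hD, hDa]; omega
  have hDaD : Da ≠ D := by intro h; rw [Fin.ext_iff, hD, hDa] at h; omega
  refine ⟨fun r r' => ?_, fun r r' hr hr' hlt => ?_, fun hsm' => ?_⟩
  · have key1 : ∀ r'' : Fin (a+b), r'' ≠ D → (π d < π (W r'') ↔ D < r'') := by
      intro r'' hne
      rcases lt_trichotomy r'' D with hlt | h | hgt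
      · constructor
        · intro hc; exact absurd (hc.trans (hsm r'' hlt)) (lt_irrefl _)
        · intro hc; exact absurd hc (not_lt.2 hlt.le)
      · exact absurd h hne
      · exact ⟨fun _ => hgt, fun _ => hdx.trans ((hW.1 D r'').2 hgt)⟩
    have key2 : ∀ r'' : Fin (a+b), r'' ≠ D → (π (W r'') < π d ↔ r'' < D) := by
      intro r'' hne
      constructor
      · intro hc
        rcases lt_trichotomy r'' D with hlt | h | hgt
        · exact hlt
        · exact absurd h hne
        · exact absurd (hdx.trans ((hW.1 D r'').2 hgt)) (not_lt.2 hc.le)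
      · intro hc; exact hsm r'' hc
    rcases eq_or_ne r D with h | hrD
    · rcases eq_or_ne r' D with h' | hr'D
      · subst h; subst h'; simp
      · subst h; rw [Function.update_self, Function.update_of_ne hr'D]; exact key1 r' hr'D
    · rcases eq_or_ne r' D with h' | hr'D
      · subst h'; rw [Function.update_self, Function.update_of_ne hrD]; exact key2 r hrD
      · rw [Function.update_of_ne hrD, Function.update_of_ne hr'D]; exact hW.1 r r'
  · have hrD : r ≠ D := by intro h; rw [Fin.ext_iff, hD] at h; omega
    have hr'D : r' ≠ D := by intro h; rw [Fin.ext_iff, hD] at h; omega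
    rw [Function.update_of_ne hrD, Function.update_of_ne hr'D]
    exact hW.2.1 r r' hr hr' hlt
  · have h1 := hsm' hDDa
    rw [Function.update_self, Function.update_of_ne hDaD] at h1
    exact absurd h1 (not_lt.2 hpd.le)

/-- β-config: replace the rank-a entry `p` by `e`. -/
lemma updateDa_good {n a b : ℕ} {π : Equiv.Perm (Fin n)}
    {W : Fin (a+b) → Fin n} (hW : GoodW n a b π W) {e : Fin n}
    {D Da : Fin (a+b)} (hD : (D : ℕ) = a - 2) (hDa : (Da : ℕ) = a - 1) (ha : 2 ≤ a)
    (hex : π (W D) < π e) (hey : π e < π (W Da)) (hep : e < W Da)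
    (hC : ∀ r : Fin (a+b), r < D → W r < e)
    (hnm : (∃ r : Fin (a+b), r < D ∧ W D < W r) ∨ e < W D) :
    GoodW n a b π (Function.update W Da e) := by
  have hDDa : D < Da := by rw [Fin.lt_def, hD, hDa]; omega
  have hDaD : Da ≠ D := by intro h; rw [Fin.ext_iff, hD, hDa] at h; omega
  have hlow : ∀ r : Fin (a+b), r < Da → π (W r) < π e := by
    intro r hr
    rcases lt_trichotomy r D with hlt | h | hgt
    · exact ((hW.1 r D).2 hlt).trans hex
    · rw [h]; exact hex
    · exfalso
      rw [Fin.lt_def, hD] at hgt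
      rw [Fin.lt_def, hDa] at hr
      omega
  refine ⟨fun r r' => ?_, fun r r' hr hr' hlt => ?_, fun hsm' => ?_⟩
  · have key1 : ∀ r'' : Fin (a+b), r'' ≠ Da → (π e < π (W r'') ↔ Da < r'') := by
      intro r'' hne
      rcases lt_trichotomy r'' Da with hlt | h | hgt
      · constructor
        · intro hc; exact absurd (hc.trans (hlow r'' hlt)) (lt_irrefl _)
        · intro hc; exact absurd hc (not_lt.2 hlt.le)
      · exact absurd h hne
      · exact ⟨fun _ => hgt, fun _ => hey.trans ((hW.1 Da r'').2 hgt)⟩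
    have key2 : ∀ r'' : Fin (a+b), r'' ≠ Da → (π (W r'') < π e ↔ r'' < Da) := by
      intro r'' hne
      constructor
      · intro hc
        rcases lt_trichotomy r'' Da with hlt | h | hgt
        · exact hlt
        · exact absurd h hne
        · exact absurd (hey.trans ((hW.1 Da r'').2 hgt)) (not_lt.2 hc.le)
      · intro hc; exact hlow r'' hc
    rcases eq_or_ne r Da with h | hrD
    · rcases eq_or_ne r' Da with h' | hr'D
      · subst h; subst h'; simp
      · subst h; rw [Function.update_self, Function.update_of_ne hr'D]; exact key1 r' hr'D
    · rcases eq_or_ne r' Da with h' | hr'D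
      · subst h'; rw [Function.update_self, Function.update_of_ne hrD]; exact key2 r hrD
      · rw [Function.update_of_ne hrD, Function.update_of_ne hr'D]; exact hW.1 r r'
  · rcases eq_or_ne r Da with h | hrDa
    · have hlt' : Da < r' := by rw [← h]; exact hlt
      have hr'Da : r' ≠ Da := by intro hh; rw [hh] at hlt'; exact lt_irrefl _ hlt'
      rw [h, Function.update_self, Function.update_of_ne hr'Da]
      exact hep.trans (hW.2.1 Da r' (by rw [hDa]; omega) hr' hlt')
    · rw [Function.update_of_ne hrDa]
      rcases eq_or_ne r' Da with h' | hr'Da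
      · have hlt' : r < Da := by rw [← h']; exact hlt
        rw [h', Function.update_self]
        apply hC
        rw [Fin.lt_def, hD]
        rw [Fin.lt_def, hDa] at hlt'
        have : (r : ℕ) ≠ a - 2 := hr
        omega
      · rw [Function.update_of_ne hr'Da]
        exact hW.2.1 r r' hr hr' hlt
  · rcases hnm with ⟨r, hrD, hLr⟩ | hEL
    · have h1 := hsm' hrD
      have hrDa : r ≠ Da := by
        intro h; rw [Fin.lt_def, hD] at hrD; rw [h, hDa] at hrD; omega
      rw [Function.update_of_ne hrDa, Function.update_of_ne (fun h => hDaD h.symm)] at h1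
      exact absurd hLr (not_lt.2 h1.le)
    · have h1 := hsm' hDDa
      rw [Function.update_of_ne (fun h => hDaD h.symm), Function.update_self] at h1
      exact absurd hEL (not_lt.2 h1.le)

/-- dichotomy from non-monotonicity of a good witness -/
lemma good_dichotomy {n a b : ℕ} {π : Equiv.Perm (Fin n)}
    {W : Fin (a+b) → Fin n} (hW : GoodW n a b π W)
    {D Da : Fin (a+b)} (hD : (D : ℕ) = a - 2) (hDa : (Da : ℕ) = a - 1) (ha : 2 ≤ a) :
    (∃ r : Fin (a+b), r < D ∧ W D < W r) ∨ W Da < W D := by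
  by_contra hcon
  push_neg at hcon
  obtain ⟨h1, h2⟩ := hcon
  have hinj : Function.Injective W := GoodW_inj hW
  have hDDa : D ≠ Da := by intro h; rw [Fin.ext_iff, hD, hDa] at h; omega
  have hbelow : ∀ r : Fin (a+b), r < D → W r < W D := by
    intro r hr
    rcases lt_trichotomy (W r) (W D) with h | h | h
    · exact h
    · exact absurd (hinj h) (by intro hh; rw [hh] at hr; exact lt_irrefl _ hr)
    · exact absurd h (not_lt.2 (h1 r hr))
  have habove : W D < W Da := by
    rcases lt_trichotomy (W D) (W Da) with h | h | h
    · exact h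
    · exact absurd (hinj h) hDDa
    · exact absurd h (not_lt.2 h2)
  apply hW.2.2
  intro r r' hlt
  rcases eq_or_ne r D with h | hrD
  · rcases eq_or_ne r' Da with h' | hr'Da
    · rw [h, h']; exact habove
    · have hr'D : r' ≠ D := by
        intro hh
        rw [hh] at hlt; rw [h] at hlt; exact lt_irrefl _ hlt
      have : Da < r' := by
        rw [Fin.lt_def, hDa]
        have g1 : (D : ℕ) < (r' : ℕ) := by rw [← h]; exact hlt
        rw [hD] at g1
        have g2 : (r' : ℕ) ≠ a - 2 := fun hh => hr'D (Fin.ext (by rw [hh, hD]))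
        have g3 : (r' : ℕ) ≠ a - 1 := fun hh => hr'Da (Fin.ext (by rw [hh, hDa]))
        omega
      rw [h]
      exact habove.trans (hW.2.1 Da r' (by rw [hDa]; omega)
        (fun hh => hr'D (Fin.ext (by rw [hh, hD]))) this)
  · rcases eq_or_ne r' D with h' | hr'D
    · rw [h']; exact hbelow r (by rw [← h']; exact hlt)
    · exact hW.2.1 r r' (fun hh => hrD (Fin.ext (by rw [hh, hD])))
        (fun hh => hr'D (Fin.ext (by rw [hh, hD]))) hlt


lemma rotPerm_apply {n x y : ℕ} (hxy : x ≤ y) (hy : y < n) (v : Fin n) :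
    ((rotPerm n x y v : Fin n) : ℕ) =
      if (v : ℕ) = y then x else if x ≤ (v : ℕ) ∧ (v : ℕ) < y then (v : ℕ) + 1 else (v : ℕ) := by
  rw [rotPerm, dif_pos ⟨hxy, hy⟩]
  simp only [Equiv.coe_fn_mk]
  split_ifs <;> rfl

section CoreLemmas
variable {n a b : ℕ} {π : Equiv.Perm (Fin n)} {W : Fin (a+b) → Fin n}
  {D Da : Fin (a+b)}

lemma claim_pos (hW : GoodW n a b π W)
    (hD : (D : ℕ) = a - 2) (hDa : (Da : ℕ) = a - 1) (ha : 2 ≤ a)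
    {e d : Fin n} (hpd : W Da < d)
    (hex : (π (W D) : ℕ) ≤ (π e : ℕ))
    (hno : ∀ r : Fin n, e < r → r < d → (π d : ℕ) < (π r : ℕ) → (π e : ℕ) ≤ (π r : ℕ)) :
    ∀ r : Fin (a+b), r < D → (π d : ℕ) < (π (W r) : ℕ) → W r < e := by
  intro r hr hdr
  have hrD : (r : ℕ) ≠ a - 2 := by rw [Fin.lt_def, hD] at hr; omega
  have hrx : (π (W r) : ℕ) < (π (W D) : ℕ) := by
    have := (hW.1 r D).2 hr; rwa [Fin.lt_def] at this
  have hWrd : W r < d := (hW.2.1 r Da hrD (by rw [hDa]; omega)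
    (by rw [Fin.lt_def, hD] at hr; rw [Fin.lt_def, hDa]; omega)).trans hpd
  rcases lt_trichotomy (W r) e with h | h | h
  · exact h
  · exfalso; rw [h] at hrx; omega
  · exact absurd (hno (W r) h hWrd hdr) (by omega)

lemma claim2a (hW : GoodW n a b π W)
    (hD : (D : ℕ) = a - 2) (hDa : (Da : ℕ) = a - 1) (ha : 2 ≤ a)
    {e d : Fin n} (hpd : W Da < d)
    (hex : (π (W D) : ℕ) ≤ (π e : ℕ)) (hdu : (π d : ℕ) < (π (W D) : ℕ))
    {r0 : Fin (a+b)} (hr0 : r0 < D) (hr0d : (π d : ℕ) ≤ (π (W r0) : ℕ))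
    (hno : ∀ r : Fin n, e < r → r < d → (π d : ℕ) < (π r : ℕ) → (π e : ℕ) ≤ (π r : ℕ)) :
    ∀ r : Fin (a+b), r < D → W r < e := by
  have hr0d' : (π d : ℕ) < (π (W r0) : ℕ) := by
    rcases lt_or_eq_of_le hr0d with h | h
    · exact h
    · exfalso
      have : W r0 = d := π.injective (Fin.ext h.symm)
      have h2 : W r0 < d := (hW.2.1 r0 Da (by rw [Fin.lt_def, hD] at hr0; omega)
        (by rw [hDa]; omega)
        (by rw [Fin.lt_def, hD] at hr0; rw [Fin.lt_def, hDa]; omega)).trans hpd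
      rw [this] at h2; exact lt_irrefl _ h2
  intro r hr
  by_cases hcase : (π d : ℕ) < (π (W r) : ℕ)
  · exact claim_pos hW hD hDa ha hpd hex hno r hr hcase
  · push_neg at hcase
    have hrr0 : r < r0 := by
      have : (π (W r) : ℕ) < (π (W r0) : ℕ) := by omega
      have := (hW.1 r r0).1 (by rw [Fin.lt_def]; exact this)
      exact this
    have h1 : W r < W r0 := hW.2.1 r r0 (by rw [Fin.lt_def, hD] at hr; omega)
      (by rw [Fin.lt_def, hD] at hr0; omega) hrr0
    exact h1.trans (claim_pos hW hD hDa ha hpd hex hno r0 hr0 hr0d')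

/-- C2 : existence of a splice value -/
lemma spliceC2 (hW : GoodW n a b π W)
    (hD : (D : ℕ) = a - 2) (hDa : (Da : ℕ) = a - 1) (ha : 2 ≤ a)
    (minA : ∀ W' : Fin (a+b) → Fin n, GoodW n a b π W' →
      (π (W Da) : ℕ) ≤ (π (W' Da) : ℕ))
    (minA1 : ∀ W' : Fin (a+b) → Fin n, GoodW n a b π W' →
      (π (W' Da) : ℕ) = (π (W Da) : ℕ) → (π (W D) : ℕ) ≤ (π (W' D) : ℕ))
    {e d : Fin n} (hep : e < W Da) (hpd : W Da < d)
    (hex : (π (W D) : ℕ) ≤ (π e : ℕ)) (hey : (π e : ℕ) < (π (W Da) : ℕ))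
    (hdu : (π d : ℕ) < (π (W D) : ℕ)) :
    ∃ r : Fin n, e < r ∧ r < d ∧ (π d : ℕ) < (π r : ℕ) ∧ (π r : ℕ) < (π e : ℕ) := by
  by_contra hcon
  push_neg at hcon
  have hno : ∀ r : Fin n, e < r → r < d → (π d : ℕ) < (π r : ℕ) → (π e : ℕ) ≤ (π r : ℕ) :=
    fun r h1 h2 h3 => hcon r h1 h2 h3
  by_cases hall : ∀ r : Fin (a+b), r < D → (π (W r) : ℕ) < (π d : ℕ)
  · -- γ-configuration
    have hG := updateD_good hW hD hDa ha hpd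
      (fun r hr => by rw [Fin.lt_def]; exact hall r hr)
      (by rw [Fin.lt_def]; exact hdu)
    have hDaD : Da ≠ D := by intro h; rw [Fin.ext_iff, hD, hDa] at h; omega
    have := minA1 (Function.update W D d) hG
      (by rw [Function.update_of_ne hDaD])
    rw [Function.update_self] at this
    omega
  · push_neg at hall
    obtain ⟨r0, hr0, hr0d⟩ := hall
    have hC : ∀ r : Fin (a+b), r < D → W r < e :=
      claim2a hW hD hDa ha hpd hex hdu hr0 hr0d hno
    by_cases hvx : (π e : ℕ) = (π (W D) : ℕ)
    · -- e is the value-x entry, i.e. e = W D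
      have heL : e = W D := π.injective (Fin.ext hvx)
      rcases good_dichotomy hW hD hDa ha with ⟨r, hrD, hLr⟩ | hpL
      · exact absurd hLr (not_lt.2 (heL ▸ (hC r hrD)).le)
      · exact absurd (heL ▸ hep) (not_lt.2 hpL.le)
    · have hvx' : (π (W D) : ℕ) < (π e : ℕ) := by omega
      -- the value-x entry W D lies before e or after d
      have hLpos : W D < e ∨ d < W D := by
        have hne1 : W D ≠ e := fun h => hvx (by rw [h])
        have hne2 : W D ≠ d := fun h => by rw [h] at hdu; omega
        rcases lt_trichotomy (W D) e with h | h | h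
        · exact Or.inl h
        · exact absurd h hne1
        · rcases lt_trichotomy (W D) d with h' | h' | h'
          · exact absurd (hno (W D) h h' hdu) (by omega)
          · exact absurd h' hne2
          · exact Or.inr h'
      have hnm : (∃ r : Fin (a+b), r < D ∧ W D < W r) ∨ e < W D := by
        rcases hLpos with h | h
        · rcases good_dichotomy hW hD hDa ha with hd1 | hd2
          · exact Or.inl hd1
          · exact absurd (h.trans hep) (not_lt.2 hd2.le)
        · exact Or.inr ((hep.trans hpd).trans h)
      have hG := updateDa_good hW hD hDa ha (by rw [Fin.lt_def]; exact hvx')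
        (by rw [Fin.lt_def]; exact hey) hep hC hnm
      have := minA (Function.update W Da e) hG
      rw [Function.update_self] at this
      omega

/-- C1 : existence of a smaller value after `e` (case where `p` is last in the chain) -/
lemma spliceC1 (hW : GoodW n a b π W)
    (hD : (D : ℕ) = a - 2) (hDa : (Da : ℕ) = a - 1) (ha : 2 ≤ a)
    (minA : ∀ W' : Fin (a+b) → Fin n, GoodW n a b π W' →
      (π (W Da) : ℕ) ≤ (π (W' Da) : ℕ))
    {e : Fin n} (hep : e < W Da)
    (hex : (π (W D) : ℕ) ≤ (π e : ℕ)) (hey : (π e : ℕ) < (π (W Da) : ℕ)) :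
    ∃ r : Fin n, e < r ∧ (π r : ℕ) < (π e : ℕ) := by
  by_contra hcon
  push_neg at hcon
  have hC : ∀ r : Fin (a+b), r < D → W r < e := by
    intro r hr
    have hrx : (π (W r) : ℕ) < (π (W D) : ℕ) := by
      have := (hW.1 r D).2 hr; rwa [Fin.lt_def] at this
    rcases lt_trichotomy (W r) e with h | h | h
    · exact h
    · exfalso; rw [h] at hrx; omega
    · exact absurd (hcon (W r) h) (by omega)
  by_cases hvx : (π e : ℕ) = (π (W D) : ℕ)
  · have heL : e = W D := π.injective (Fin.ext hvx)
    rcases good_dichotomy hW hD hDa ha with ⟨r, hrD, hLr⟩ | hpL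
    · exact absurd hLr (not_lt.2 (heL ▸ (hC r hrD)).le)
    · exact absurd (heL ▸ hep) (not_lt.2 hpL.le)
  · have hvx' : (π (W D) : ℕ) < (π e : ℕ) := by omega
    have hLe : W D < e := by
      rcases lt_trichotomy (W D) e with h | h | h
      · exact h
      · exact absurd h (fun hh => hvx (by rw [hh]))
      · exact absurd (hcon (W D) h) (by omega)
    have hnm : (∃ r : Fin (a+b), r < D ∧ W D < W r) ∨ e < W D := by
      rcases good_dichotomy hW hD hDa ha with hd1 | hd2
      · exact Or.inl hd1
      · exact absurd (hLe.trans hep) (not_lt.2 hd2.le)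
    have hG := updateDa_good hW hD hDa ha (by rw [Fin.lt_def]; exact hvx')
      (by rw [Fin.lt_def]; exact hey) hep hC hnm
    have := minA (Function.update W Da e) hG
    rw [Function.update_self] at this
    omega

end CoreLemmas

lemma goodW_actsAs {n a b : ℕ} (ha : 2 ≤ a) {π : Equiv.Perm (Fin n)}
    {W : Fin (a+b) → Fin n} (hW : GoodW n a b π W)
    {Da : Fin (a+b)} (hDa : (Da : ℕ) = a - 1) :
    ActsAs π (partialShuffle (a+b) (a-1)) a ((π (W Da) : ℕ) + 1) := by
  obtain ⟨ρ, hρ, f, hocc, ⟨j, hj1, hj2⟩, -⟩ := toOcc ha hW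
  have hbr : (⟨a-1, by omega⟩ : Fin (a+b)) = Da := Fin.ext (by simp [hDa])
  rw [hbr] at hj2
  exact ⟨ρ, hρ, f, hocc, j, hj1, by rw [hj2]⟩

lemma goodW_isAssoc {n a b : ℕ} (ha : 2 ≤ a) {π : Equiv.Perm (Fin n)}
    {W : Fin (a+b) → Fin n} (hW : GoodW n a b π W)
    {D Da : Fin (a+b)} (hD : (D : ℕ) = a - 2) (hDa : (Da : ℕ) = a - 1)
    (hval : (π (W Da) : ℕ) + 1 = underA n a b π) :
    IsAssoc n a b π ((π (W D) : ℕ) + 1) := by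
  obtain ⟨ρ, hρ, f, hocc, ⟨j, hj1, hj2⟩, ⟨l, hl1, hl2⟩⟩ := toOcc ha hW
  have hbr : (⟨a-1, by omega⟩ : Fin (a+b)) = Da := Fin.ext (by simp [hDa])
  have hbr2 : (⟨a-2, by omega⟩ : Fin (a+b)) = D := Fin.ext (by simp [hD])
  rw [hbr] at hj2
  rw [hbr2] at hl2
  exact ⟨ρ, hρ, f, hocc, ⟨j, hj1, by rw [hj2]; exact hval⟩, ⟨l, hl1, by rw [hl2]⟩⟩

lemma actsAs_goodW {n a b : ℕ} (ha : 2 ≤ a) {π : Equiv.Perm (Fin n)} {v : ℕ}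
    {Da : Fin (a+b)} (hDa : (Da : ℕ) = a - 1)
    (h : ActsAs π (partialShuffle (a+b) (a-1)) a v) :
    ∃ W : Fin (a+b) → Fin n, GoodW n a b π W ∧ (π (W Da) : ℕ) + 1 = v := by
  obtain ⟨ρ, hρ, f, hocc, j, hj1, hj2⟩ := h
  refine ⟨fun r => f (ρ.symm r), fromOcc ha hρ hocc, ?_⟩
  have hj : ρ.symm Da = j := by
    apply ρ.injective
    rw [Equiv.apply_symm_apply]
    exact Fin.ext (by rw [hDa]; omega)
  simp only [hj]
  exact hj2

lemma isAssoc_goodW {n a b : ℕ} (ha : 2 ≤ a) {π : Equiv.Perm (Fin n)} {q : ℕ}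
    {D Da : Fin (a+b)} (hD : (D : ℕ) = a - 2) (hDa : (Da : ℕ) = a - 1)
    (h : IsAssoc n a b π q) :
    ∃ W : Fin (a+b) → Fin n, GoodW n a b π W ∧
      (π (W Da) : ℕ) + 1 = underA n a b π ∧
      (π (W D) : ℕ) + 1 = q := by
  obtain ⟨ρ, hρ, f, hocc, ⟨j, hj1, hj2⟩, ⟨l, hl1, hl2⟩⟩ := h
  refine ⟨fun r => f (ρ.symm r), fromOcc ha hρ hocc, ?_, ?_⟩
  · have hj : ρ.symm Da = j := by
      apply ρ.injective
      rw [Equiv.apply_symm_apply]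
      exact Fin.ext (by rw [hDa]; omega)
    simp only [hj]
    exact hj2
  · have hl : ρ.symm D = l := by
      apply ρ.injective
      rw [Equiv.apply_symm_apply]
      exact Fin.ext (by rw [hD]; omega)
    simp only [hl]
    exact hl2

lemma chain_contains {n m : ℕ} (π : Equiv.Perm (Fin n)) (G : Fin (m+1) → Fin n)
    (hmono : StrictMono G)
    (hdec : ∀ i j : Fin (m+1), i < j → π (G j) < π (G i)) :
    PermContains π (descPerm (m+1)) := by
  refine ⟨G, hmono, fun j l => ?_⟩
  have hrev : descPerm (m+1) j < descPerm (m+1) l ↔ l < j := by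
    simp only [descPerm, Fin.revPerm_apply]
    exact Fin.rev_lt_rev
  rw [hrev]
  constructor
  · intro hc
    rcases lt_trichotomy j l with h | h | h
    · exact absurd (hdec j l h) (not_lt.2 hc.le)
    · rw [h] at hc; exact absurd hc (lt_irrefl _)
    · exact h
  · exact hdec l j


theorem Smap_avoids_delta (a b m n : ℕ) (ha : 2 ≤ a) (hm : 1 ≤ m) (π : Equiv.Perm (Fin n))
    (hσ : ¬ PermContains π (sigmaPerm (a + b) a ha (Nat.le_add_right a b)))
    (hδ : ¬ PermContains π (descPerm (m + 1))) :
    ¬ PermContains (Smap n a b π) (descPerm (m + 1)) := by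
  by_cases hc : ∃ ρ ∈ partialShuffle (a + b) (a - 1), PermContains π ρ
  case neg => rw [Smap, if_neg hc]; exact hδ
  case pos =>
  obtain ⟨Da, hDa⟩ : ∃ DD : Fin (a+b), (DD : ℕ) = a - 1 := ⟨⟨a-1, by omega⟩, rfl⟩
  obtain ⟨D, hD⟩ : ∃ DD : Fin (a+b), (DD : ℕ) = a - 2 := ⟨⟨a-2, by omega⟩, rfl⟩
  have hSAne : {v | ActsAs π (partialShuffle (a + b) (a - 1)) a v}.Nonempty := by
    obtain ⟨ρ0, hρ0, f0, hf0⟩ := hc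
    exact ⟨_, goodW_actsAs ha (fromOcc ha hρ0 hf0) hDa⟩
  have hAmem : ActsAs π (partialShuffle (a + b) (a - 1)) a (underA n a b π) :=
    Nat.sInf_mem hSAne
  obtain ⟨W1, hW1, hW1v⟩ := actsAs_goodW ha hDa hAmem
  have hSA1ne : {q | IsAssoc n a b π q}.Nonempty := ⟨_, goodW_isAssoc ha hW1 hD hDa hW1v⟩
  have hA1mem : IsAssoc n a b π (underA1 n a b π) := Nat.sInf_mem hSA1ne
  obtain ⟨W, hW, hWy, hWx⟩ := isAssoc_goodW ha hD hDa hA1mem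
  have hxy : (π (W D) : ℕ) < (π (W Da) : ℕ) := by
    have := (hW.1 D Da).2 (by rw [Fin.lt_def, hD, hDa]; omega)
    rwa [Fin.lt_def] at this
  have minA : ∀ W' : Fin (a+b) → Fin n, GoodW n a b π W' →
      (π (W Da) : ℕ) ≤ (π (W' Da) : ℕ) := by
    intro W' hW'
    have h1 : underA n a b π ≤ (π (W' Da) : ℕ) + 1 :=
      Nat.sInf_le (goodW_actsAs ha hW' hDa)
    omega
  have minA1 : ∀ W' : Fin (a+b) → Fin n, GoodW n a b π W' →
      (π (W' Da) : ℕ) = (π (W Da) : ℕ) → (π (W D) : ℕ) ≤ (π (W' D) : ℕ) := by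
    intro W' hW' hval
    have h1 : underA1 n a b π ≤ (π (W' D) : ℕ) + 1 :=
      Nat.sInf_le (goodW_isAssoc ha hW' hD hDa (by rw [hval]; exact hWy))
    omega
  rw [Smap, if_pos hc]
  rw [show underA1 n a b π - 1 = (π (W D) : ℕ) from by omega,
      show underA n a b π - 1 = (π (W Da) : ℕ) from by omega]
  intro hcontain
  obtain ⟨F, hFmono, hFiff⟩ := hcontain
  have hyn : ((π (W Da)) : ℕ) < n := (π (W Da)).isLt
  have hrotv : ∀ w : Fin n, ((rotPerm n (π (W D) : ℕ) (π (W Da) : ℕ)) w : ℕ) =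
      if (w : ℕ) = (π (W Da) : ℕ) then (π (W D) : ℕ)
      else if (π (W D) : ℕ) ≤ (w : ℕ) ∧ (w : ℕ) < (π (W Da) : ℕ) then (w : ℕ) + 1
      else (w : ℕ) :=
    rotPerm_apply (le_of_lt hxy) hyn
  have hrot : ∀ j l : Fin (m+1),
      ((rotPerm n (π (W D) : ℕ) (π (W Da) : ℕ)) (π (F j)) <
        (rotPerm n (π (W D) : ℕ) (π (W Da) : ℕ)) (π (F l)) ↔ l < j) := by
    intro j l
    have h0 := hFiff j l
    rw [Equiv.Perm.mul_apply, Equiv.Perm.mul_apply] at h0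
    rw [h0]
    simp only [descPerm, Fin.revPerm_apply]
    exact Fin.rev_lt_rev
  have hvinj : ∀ j l : Fin (m+1), (π (F j) : ℕ) = (π (F l) : ℕ) → j = l := by
    intro j l h
    exact hFmono.injective (π.injective (Fin.ext h))
  have key : ∀ j l : Fin (m+1), (π (F j) : ℕ) < (π (F l) : ℕ) → j < l →
      (π (F l) : ℕ) = (π (W Da) : ℕ) ∧ (π (W D) : ℕ) ≤ (π (F j) : ℕ) := by
    intro j l h1 h2
    have h3 := (hrot l j).2 h2
    rw [Fin.lt_def, hrotv, hrotv] at h3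
    split_ifs at h3 <;> omega
  by_cases hbad : ∃ jl : Fin (m+1) × Fin (m+1), jl.1 < jl.2 ∧ (π (F jl.1) : ℕ) < (π (F jl.2) : ℕ)
  case neg =>
    push_neg at hbad
    apply hδ
    apply chain_contains π F hFmono
    intro i j hij
    have h1 := hbad (i, j) hij
    have hne : (π (F j) : ℕ) ≠ (π (F i) : ℕ) := by
      intro h
      have := hvinj j i h
      rw [this] at hij
      exact lt_irrefl _ hij
    rw [Fin.lt_def]
    simp only at h1
    omega
  case pos =>
  obtain ⟨⟨j0, k⟩, hj0k, hvj0k⟩ := hbad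
  simp only at hj0k hvj0k
  obtain ⟨hky, hj0x⟩ := key j0 k hvj0k hj0k
  have hFk : F k = W Da := π.injective (Fin.ext hky)
  have hk1 : 1 ≤ (k : ℕ) := by
    rw [Fin.lt_def] at hj0k; omega
  have fact1 : ∀ j : Fin (m+1), j < k →
      (π (W D) : ℕ) ≤ (π (F j) : ℕ) ∧ (π (F j) : ℕ) ≠ (π (W Da) : ℕ) := by
    intro j hj
    have hne : (π (F j) : ℕ) ≠ (π (W Da) : ℕ) := by
      intro h
      have := hvinj j k (by rw [h, hky])
      rw [this] at hj; exact lt_irrefl _ hj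
    have h3 := (hrot k j).2 hj
    rw [Fin.lt_def, hrotv, hrotv] at h3
    split_ifs at h3 <;> omega
  have fact2 : ∀ l : Fin (m+1), k < l → (π (F l) : ℕ) < (π (W D) : ℕ) := by
    intro l hl
    have hne : (π (F l) : ℕ) ≠ (π (W Da) : ℕ) := by
      intro h
      have := hvinj l k (by rw [h, hky])
      rw [this] at hl; exact lt_irrefl _ hl
    have h3 := (hrot l k).2 hl
    rw [Fin.lt_def, hrotv, hrotv] at h3
    split_ifs at h3 <;> omega
  have fact3 : ∀ i j : Fin (m+1), i < j → j ≠ k → (π (F j) : ℕ) < (π (F i) : ℕ) := by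
    intro i j hij hjk
    rcases lt_trichotomy ((π (F j)) : ℕ) ((π (F i)) : ℕ) with h | h | h
    · exact h
    · exfalso
      have := hvinj j i h
      rw [this] at hij; exact lt_irrefl _ hij
    · exfalso
      obtain ⟨hy', -⟩ := key i j h hij
      exact hjk (hvinj j k (by rw [hy', hky]))
  obtain ⟨k', hk'⟩ : ∃ t : Fin (m+1), (t : ℕ) = (k : ℕ) - 1 := ⟨⟨(k:ℕ)-1, by omega⟩, rfl⟩
  have hk'k : k' < k := by rw [Fin.lt_def]; omega
  have hk'ne : k' ≠ k := fun h => by rw [h] at hk'; omega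
  have hvk' : (π (W D) : ℕ) ≤ (π (F k') : ℕ) ∧ (π (F k') : ℕ) ≠ (π (W Da) : ℕ) :=
    fact1 k' hk'k
  have hvk'y : (π (F k') : ℕ) < (π (W Da) : ℕ) := by
    rcases eq_or_lt_of_le (show j0 ≤ k' from by rw [Fin.le_def, hk']; rw [Fin.lt_def] at hj0k; omega)
      with h | h
    · rw [← h]; omega
    · have := fact3 j0 k' h hk'ne
      omega
  have hek : F k' < W Da := hFk ▸ hFmono hk'k
  have hupper : ∀ i : Fin (m+1), i < k → (π (F k') : ℕ) ≤ (π (F i) : ℕ) := by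
    intro i hi
    rcases eq_or_ne i k' with h | h
    · rw [h]
    · have hik' : i < k' := by
        rw [Fin.lt_def, hk']
        rw [Fin.lt_def] at hi
        have : (i : ℕ) ≠ (k' : ℕ) := fun hh => h (Fin.ext (by rw [hh]))
        rw [hk'] at this
        omega
      exact (fact3 i k' hik' hk'ne).le
  rcases Nat.lt_or_ge (k : ℕ) m with hklt | hkge
  · -- k is not the last index
    obtain ⟨k1, hk1d⟩ : ∃ t : Fin (m+1), (t : ℕ) = (k : ℕ) + 1 := ⟨⟨(k:ℕ)+1, by omega⟩, rfl⟩
    have hkk1 : k < k1 := by rw [Fin.lt_def]; omega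
    have hk1ne : k1 ≠ k := fun h => by rw [h] at hk1d; omega
    have hu : (π (F k1) : ℕ) < (π (W D) : ℕ) := fact2 k1 hkk1
    have hlower : ∀ j : Fin (m+1), k < j → (π (F j) : ℕ) ≤ (π (F k1) : ℕ) := by
      intro j hj
      rcases eq_or_ne j k1 with h | h
      · rw [h]
      · have hk1j : k1 < j := by
          rw [Fin.lt_def, hk1d]
          rw [Fin.lt_def] at hj
          have : (j : ℕ) ≠ (k1 : ℕ) := fun hh => h (Fin.ext (by rw [hh]))
          rw [hk1d] at this
          omega
        exact (fact3 k1 j hk1j (fun hh => by rw [hh] at hk1j; rw [Fin.lt_def] at hk1j; omega)).le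
    obtain ⟨r, her, hrd, hur, hrv⟩ := spliceC2 hW hD hDa ha minA minA1
      hek (hFk ▸ hFmono hkk1) hvk'.1 hvk'y hu
    apply hδ
    apply chain_contains π (Function.update F k r)
    · intro i j hij
      rcases eq_or_ne i k with h | hik
      · have hj : k < j := by rw [← h]; exact hij
        have hjk : j ≠ k := fun hh => by rw [hh] at hj; exact lt_irrefl _ hj
        rw [h, Function.update_self, Function.update_of_ne hjk]
        have hle : k1 ≤ j := by rw [Fin.le_def, hk1d]; rw [Fin.lt_def] at hj; omega
        exact hrd.trans_le (hFmono.monotone hle)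
      · rcases eq_or_ne j k with h' | hjk
        · have hi : i < k := by rw [← h']; exact hij
          rw [h', Function.update_self, Function.update_of_ne hik]
          have hle : i ≤ k' := by rw [Fin.le_def, hk']; rw [Fin.lt_def] at hi; omega
          exact lt_of_le_of_lt (hFmono.monotone hle) her
        · rw [Function.update_of_ne hik, Function.update_of_ne hjk]
          exact hFmono hij
    · intro i j hij
      rw [Fin.lt_def]
      rcases eq_or_ne i k with h | hik
      · have hj : k < j := by rw [← h]; exact hij
        have hjk : j ≠ k := fun hh => by rw [hh] at hj; exact lt_irrefl _ hj
        rw [h, Function.update_self, Function.update_of_ne hjk]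
        have := hlower j hj
        omega
      · rcases eq_or_ne j k with h' | hjk
        · have hi : i < k := by rw [← h']; exact hij
          rw [h', Function.update_self, Function.update_of_ne hik]
          have := hupper i hi
          omega
        · rw [Function.update_of_ne hik, Function.update_of_ne hjk]
          exact fact3 i j hij hjk
  · -- k is the last index
    obtain ⟨r, her, hrv⟩ := spliceC1 hW hD hDa ha minA hek hvk'.1 hvk'y
    have hklast : (k : ℕ) = m := by omega
    apply hδ
    apply chain_contains π (Function.update F k r)
    · intro i j hij
      rcases eq_or_ne i k with h | hik
      · exfalso
        have hj : k < j := by rw [← h]; exact hij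
        rw [Fin.lt_def] at hj
        omega
      · rcases eq_or_ne j k with h' | hjk
        · have hi : i < k := by rw [← h']; exact hij
          rw [h', Function.update_self, Function.update_of_ne hik]
          have hle : i ≤ k' := by rw [Fin.le_def, hk']; rw [Fin.lt_def] at hi; omega
          exact lt_of_le_of_lt (hFmono.monotone hle) her
        · rw [Function.update_of_ne hik, Function.update_of_ne hjk]
          exact hFmono hij
    · intro i j hij
      rw [Fin.lt_def]
      rcases eq_or_ne i k with h | hik
      · exfalso
        have hj : k < j := by rw [← h]; exact hij
        rw [Fin.lt_def] at hj
        omega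
      · rcases eq_or_ne j k with h' | hjk
        · have hi : i < k := by rw [← h']; exact hij
          rw [h', Function.update_self, Function.update_of_ne hik]
          have := hupper i hi
          omega
        · rw [Function.update_of_ne hik, Function.update_of_ne hjk]
          exact fact3 i j hij hjk
end

section
/- For every positive integer k, the number of sequences (a_1, a_2, …, a_k) of non-negative integers satisfying a_1 + a_2 + ⋯ + a_j < j for every j ∈ {1,…,k} equals the k-th Catalan number C_k. -/
namespace CatalanAux

/-- Extend `f : Fin n → ℕ` to `ℕ` by zero. -/
def ext {n : ℕ} (f : Fin n → ℕ) (i : ℕ) : ℕ := if h : i < n then f ⟨i, h⟩ else 0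

lemma sum_Iic_eq {n : ℕ} (f : Fin n → ℕ) (j : Fin n) :
    ∑ i ∈ Finset.Iic j, f i = ∑ i ∈ Finset.range ((j : ℕ) + 1), ext f i := by
  have h1 : Finset.range ((j : ℕ) + 1) = Finset.Iic (j : ℕ) := by
    ext x; simp [Nat.lt_succ_iff]
  rw [h1, ← Fin.map_valEmbedding_Iic, Finset.sum_map]
  refine Finset.sum_congr rfl fun x _ => ?_
  simp [ext, x.isLt]

lemma ext_tail {n : ℕ} (f : Fin (n + 1) → ℕ) (i : ℕ) :
    ext (Fin.tail f) i = ext f (i + 1) := by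
  unfold ext
  rcases lt_or_ge i n with h | h
  · rw [dif_pos h, dif_pos (by omega)]
    congr 1
  · rw [dif_neg (by omega), dif_neg (by omega)]

lemma ext_cons_zero {n : ℕ} (t : ℕ) (g : Fin n → ℕ) : ext (Fin.cons t g) 0 = t := by
  simp [ext]

lemma ext_cons_succ {n : ℕ} (t : ℕ) (g : Fin n → ℕ) (i : ℕ) :
    ext (Fin.cons t g) (i + 1) = ext g i := by
  unfold ext
  rcases lt_or_ge i n with h | h
  · rw [dif_pos (by omega), dif_pos h]
    exact Fin.cons_succ (α := fun _ => ℕ) t g ⟨i, h⟩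
  · rw [dif_neg (by omega), dif_neg (by omega)]

/-- The ballot-type counting function. -/
def T : ℕ → ℕ → ℕ
  | 0, _ => 1
  | n + 1, c => ∑ d ∈ Finset.range (c + 1), T n (d + 1)

lemma T_zero (c : ℕ) : T 0 c = 1 := rfl

lemma T_succ (n c : ℕ) : T (n + 1) c = ∑ d ∈ Finset.range (c + 1), T n (d + 1) := rfl

lemma T_key (n : ℕ) :
    (∀ c, T n (c + 1) = ∑ i ∈ Finset.range (n + 1), catalan i * T (n - i) c) ∧
      (∀ m ≤ n, T m 0 = catalan m) := by
  induction n with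
  | zero =>
    constructor
    · intro c
      rw [T_zero, zero_add, Finset.range_one, Finset.sum_singleton, catalan_zero, one_mul]
      rfl
    · intro m hm
      interval_cases m
      rw [T_zero, catalan_zero]
  | succ n ih =>
    obtain ⟨ih1, ih2⟩ := ih
    have hcatsum : ∑ i ∈ Finset.range (n + 1), catalan i * catalan (n - i) = catalan (n + 1) := by
      rw [catalan_succ]
      exact (Fin.sum_univ_eq_sum_range (fun i => catalan i * catalan (n - i)) (n + 1)).symm
    have hc0 : T (n + 1) 0 = catalan (n + 1) := by
      rw [T_succ]
      simp only [zero_add, Finset.range_one, Finset.sum_singleton]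
      rw [ih1 0]
      rw [← hcatsum]
      exact Finset.sum_congr rfl fun i hi => by
        rw [ih2 (n - i) (by omega)]
    constructor
    · intro c
      rw [T_succ]
      have lhs : ∀ d, T n (d + 1) = ∑ i ∈ Finset.range (n + 1), catalan i * T (n - i) d :=
        fun d => ih1 d
      calc ∑ d ∈ Finset.range (c + 1 + 1), T n (d + 1)
          = ∑ d ∈ Finset.range (c + 2), ∑ i ∈ Finset.range (n + 1), catalan i * T (n - i) d := by
            refine Finset.sum_congr rfl fun d _ => lhs d
        _ = ∑ i ∈ Finset.range (n + 1), ∑ d ∈ Finset.range (c + 2), catalan i * T (n - i) d :=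
            Finset.sum_comm
        _ = ∑ i ∈ Finset.range (n + 1), catalan i * ∑ d ∈ Finset.range (c + 2), T (n - i) d := by
            simp [Finset.mul_sum]
        _ = ∑ i ∈ Finset.range (n + 1),
              catalan i * (T (n - i + 1) c + catalan (n - i)) := by
            refine Finset.sum_congr rfl fun i hi => ?_
            congr 1
            rw [Finset.sum_range_succ' (fun d => T (n - i) d) (c + 1), T_succ,
              ih2 (n - i) (by omega)]
        _ = ∑ i ∈ Finset.range (n + 1), catalan i * T (n - i + 1) c + catalan (n + 1) := by
            rw [← hcatsum, ← Finset.sum_add_distrib]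
            refine Finset.sum_congr rfl fun i hi => by ring
        _ = ∑ i ∈ Finset.range (n + 1 + 1), catalan i * T (n + 1 - i) c := by
            rw [Finset.sum_range_succ (fun i => catalan i * T (n + 1 - i) c) (n + 1)]
            rw [Nat.sub_self]
            have hT0 : T 0 c = 1 := rfl
            rw [hT0, mul_one]
            congr 1
            refine Finset.sum_congr rfl fun i hi => ?_
            simp only [Finset.mem_range] at hi
            congr 2
            omega
    · intro m hm
      rcases Nat.lt_succ_iff_lt_or_eq.mp (Nat.lt_succ_of_le hm) with h | h
      · exact ih2 m (by omega)
      · rw [h]; exact hc0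

lemma T_catalan (n : ℕ) : T n 0 = catalan n := (T_key n).2 n le_rfl

/-- The set being counted. -/
abbrev A (n c : ℕ) : Type :=
  {f : Fin n → ℕ // ∀ j : Fin n, ∑ i ∈ Finset.Iic j, f i ≤ (j : ℕ) + c}

instance (n c : ℕ) : Finite (A n c) := by
  have hb : ∀ x : A n c, ∀ j : Fin n, x.1 j < n + c + 1 := by
    intro x j
    have h1 : x.1 j ≤ ∑ i ∈ Finset.Iic j, x.1 i :=
      Finset.single_le_sum (fun i _ => Nat.zero_le _) (Finset.mem_Iic.mpr le_rfl)
    have h2 := x.2 j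
    have := j.isLt
    omega
  refine Finite.of_injective
    (fun x : A n c => fun j : Fin n => (⟨x.1 j, hb x j⟩ : Fin (n + c + 1))) ?_
  intro x y h
  apply Subtype.ext
  funext j
  have := congrFun h j
  simpa [Fin.mk.injEq] using this

/-- The decomposition equivalence. -/
def consEquiv (n c : ℕ) : A (n + 1) c ≃ Σ t : Fin (c + 1), A n (c - (t : ℕ) + 1) where
  toFun x :=
    ⟨⟨x.1 0, by
        have h := x.2 0
        rw [sum_Iic_eq] at h
        simp only [Fin.val_zero, zero_add, Finset.range_one, Finset.sum_singleton] at h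
        have he : ext x.1 0 = x.1 0 := by simp [ext]
        omega⟩,
      ⟨Fin.tail x.1, by
        intro j
        rw [sum_Iic_eq]
        obtain ⟨f, hf⟩ := x
        have h0 : f 0 ≤ c := by
          have h := hf 0
          rw [sum_Iic_eq] at h
          simpa [ext] using h
        have hs := hf (Fin.succ j)
        rw [sum_Iic_eq] at hs
        have hval : ((Fin.succ j : Fin (n + 1)) : ℕ) = (j : ℕ) + 1 := rfl
        rw [hval] at hs
        rw [Finset.sum_range_succ' (fun i => ext f i) ((j : ℕ) + 1)] at hs
        have he0 : ext f 0 = f 0 := by simp [ext]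
        have hteq : ∑ i ∈ Finset.range ((j : ℕ) + 1), ext (Fin.tail f) i
            = ∑ i ∈ Finset.range ((j : ℕ) + 1), ext f (i + 1) :=
          Finset.sum_congr rfl fun i _ => ext_tail f i
        dsimp only
        omega⟩⟩
  invFun x :=
    ⟨Fin.cons (x.1 : ℕ) x.2.1, by
      obtain ⟨t, g, hg⟩ := x
      have ht : (t : ℕ) ≤ c := by have := t.isLt; omega
      intro j
      rw [sum_Iic_eq]
      induction j using Fin.cases with
      | zero => simpa [ext_cons_zero] using ht
      | succ i =>
        have hval : ((Fin.succ i : Fin (n + 1)) : ℕ) = (i : ℕ) + 1 := rfl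
        rw [hval, Finset.sum_range_succ' (fun x => ext (Fin.cons (t : ℕ) g) x) ((i : ℕ) + 1)]
        have h1 : ∑ x ∈ Finset.range ((i : ℕ) + 1), ext (Fin.cons (t : ℕ) g) (x + 1)
            = ∑ x ∈ Finset.range ((i : ℕ) + 1), ext g x :=
          Finset.sum_congr rfl fun x _ => ext_cons_succ _ _ x
        have h2 := hg i
        rw [sum_Iic_eq] at h2
        rw [h1, ext_cons_zero]
        omega⟩
  left_inv x := by
    apply Subtype.ext
    exact Fin.cons_self_tail x.1
  right_inv x := by
    obtain ⟨t, g, hg⟩ := x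
    dsimp only
    have h1 : (Fin.cons (t : ℕ) g : Fin (n + 1) → ℕ) 0 = (t : ℕ) := Fin.cons_zero _ _
    refine Sigma.ext (Fin.ext (by simpa using h1)) ?_
    rw [Subtype.heq_iff_coe_eq (fun f => by simp only [h1])]
    show Fin.tail ((Fin.cons ((t : ℕ)) g : Fin (n + 1) → ℕ)) = g
    exact Fin.tail_cons _ _

lemma card_sigma_fin {m : ℕ} (α : Fin m → Type*) [∀ i, Finite (α i)] :
    Nat.card (Σ i, α i) = ∑ i : Fin m, Nat.card (α i) := by
  haveI : ∀ i, Fintype (α i) := fun i => Fintype.ofFinite _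
  simp [Nat.card_eq_fintype_card, Fintype.card_sigma]

lemma card_A (n : ℕ) : ∀ c, Nat.card (A n c) = T n c := by
  induction n with
  | zero =>
    intro c
    haveI : Unique (A 0 c) :=
      { default := ⟨fun i => i.elim0, fun j => j.elim0⟩
        uniq := fun a => Subtype.ext (funext fun j => j.elim0) }
    rw [T_zero]
    exact Nat.card_unique
  | succ n ih =>
    intro c
    rw [Nat.card_congr (consEquiv n c), card_sigma_fin, T_succ]
    calc ∑ t : Fin (c + 1), Nat.card (A n (c - (t : ℕ) + 1))
        = ∑ t ∈ Finset.range (c + 1), T n (c - t + 1) := by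
          rw [Fin.sum_univ_eq_sum_range (fun t => Nat.card (A n (c - t + 1))) (c + 1)]
          exact Finset.sum_congr rfl fun t _ => ih _
      _ = ∑ d ∈ Finset.range (c + 1), T n (d + 1) := by
          rw [← Finset.sum_range_reflect (fun d => T n (d + 1)) (c + 1)]
          exact Finset.sum_congr rfl fun i hi => by
            have h2 : c + 1 - 1 - i = c - i := by omega
            rw [h2]

end CatalanAux

theorem catalan_counts_bounded_partial_sums (k : ℕ) (hk : 1 ≤ k) :
    Nat.card {f : Fin k → ℕ // ∀ j : Fin k, ∑ i ∈ Finset.Iic j, f i < (j : ℕ) + 1} =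
      catalan k := by
  have e : {f : Fin k → ℕ // ∀ j : Fin k, ∑ i ∈ Finset.Iic j, f i < (j : ℕ) + 1} ≃
      CatalanAux.A k 0 :=
    Equiv.subtypeEquivRight fun f => by
      constructor <;> intro h j <;> have := h j <;> omega
  rw [Nat.card_congr e, CatalanAux.card_A, CatalanAux.T_catalan]
end

section
/- For all integers a ≥ 2 and b ≥ 0 with a + b ≥ 2, the intersection of the partial shuffles Π(a,b) and Π(a−1,b+1) consists of exactly one permutation, namely σ_{a,b}: Π(a,b) ∩ Π(a−1,b+1) = {σ_{a,b}}. -/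
section Aux

lemma swap_val {m a : ℕ} (hp : a - 2 < m) (hq : a - 1 < m) (x : Fin m) :
    ((Equiv.swap (⟨a - 2, hp⟩ : Fin m) ⟨a - 1, hq⟩) x : ℕ) =
      if (x : ℕ) = a - 2 then a - 1 else if (x : ℕ) = a - 1 then a - 2 else x := by
  rw [Equiv.swap_apply_def]
  split_ifs with h1 h2 <;> simp_all [Fin.ext_iff]

lemma perm_strictMono_eq_one_s15 {m : ℕ} (σ : Equiv.Perm (Fin m)) (h : StrictMono ⇑σ) :
    σ = 1 := by
  haveI : WellFoundedLT (Fin m) := inferInstance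
  have h2 : ⇑σ = id :=
    (StrictMono.range_inj (β := Fin m) h strictMono_id).1
      (by simp [Set.range_eq_univ.mpr σ.surjective])
  exact Equiv.Perm.ext fun x => congrFun h2 x

end Aux


theorem shuffle_intersection_eq_sigma (a b : ℕ) (ha : 2 ≤ a) :
    partialShuffle (a + b) a ∩ partialShuffle (a + b) (a - 1) =
      {sigmaPerm (a + b) a ha (Nat.le_add_right a b)} := by
  have hp : a - 2 < a + b := by omega
  have hq : a - 1 < a + b := by omega
  ext σ
  simp only [Set.mem_inter_iff, Set.mem_singleton_iff, partialShuffle, Set.mem_setOf_eq,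
    sigmaPerm]
  constructor
  · rintro ⟨⟨hne, h1⟩, ⟨-, h2⟩⟩
    have key : ∀ i j : Fin (a + b), i < j → ¬ σ i < σ j →
        (σ i : ℕ) + 1 = a ∧ (σ j : ℕ) + 2 = a := by
      intro i j hij hlt
      have hinj : σ i ≠ σ j := fun h => absurd (σ.injective h) (Fin.ne_of_lt hij)
      have hji : (σ j : ℕ) < (σ i : ℕ) := by
        have := lt_of_le_of_ne (not_lt.mp hlt) hinj.symm
        exact Fin.lt_def.mp this
      have h1' : (σ i : ℕ) + 1 = a ∨ (σ j : ℕ) + 1 = a := by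
        by_contra hc
        push_neg at hc
        exact hlt (h1 i j hij hc.1 hc.2)
      have h2' : (σ i : ℕ) + 1 = a - 1 ∨ (σ j : ℕ) + 1 = a - 1 := by
        by_contra hc
        push_neg at hc
        exact hlt (h2 i j hij hc.1 hc.2)
      omega
    obtain ⟨i0, j0, hij0, hlt0⟩ : ∃ i j : Fin (a + b), i < j ∧ ¬ σ i < σ j := by
      by_contra hno
      push_neg at hno
      exact hne (perm_strictMono_eq_one_s15 σ fun i j hij => hno i j hij)
    have hval := key i0 j0 hij0 hlt0
    have nobad : ∀ k l : Fin (a + b), k < l → (σ k : ℕ) + 2 = a →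
        (σ l : ℕ) + 1 = a → False := by
      intro k l hkl hk hl
      have e1 : σ k = σ j0 := Fin.ext (by omega)
      have e2 : σ l = σ i0 := Fin.ext (by omega)
      have := σ.injective e1
      have := σ.injective e2
      have hkl' := Fin.lt_def.mp hkl
      have hij0' := Fin.lt_def.mp hij0
      subst this
      omega
    have hst : StrictMono ⇑(Equiv.swap (⟨a - 2, hp⟩ : Fin (a + b)) ⟨a - 1, hq⟩ * σ) := by
      intro k l hkl
      have hkl' := Fin.lt_def.mp hkl
      simp only [Equiv.Perm.mul_apply]
      rw [Fin.lt_def, swap_val, swap_val]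
      by_cases h : σ k < σ l
      · have hxy := Fin.lt_def.mp h
        have hbad : ¬((σ k : ℕ) + 2 = a ∧ (σ l : ℕ) + 1 = a) := fun ⟨u, v⟩ =>
          nobad k l hkl u v
        split_ifs <;> omega
      · have := key k l hkl h
        split_ifs <;> omega
    have hone := perm_strictMono_eq_one_s15 _ hst
    have : σ = (Equiv.swap (⟨a - 2, hp⟩ : Fin (a + b)) ⟨a - 1, hq⟩)⁻¹ :=
      (mul_eq_one_iff_inv_eq.mp hone).symm
    rw [this, Equiv.swap_inv]
  · rintro rfl
    have hne : Equiv.swap (⟨a - 2, hp⟩ : Fin (a + b)) ⟨a - 1, hq⟩ ≠ 1 := by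
      rw [Ne, Equiv.swap_eq_one_iff, Fin.ext_iff]
      simp only
      omega
    refine ⟨⟨hne, ?_⟩, hne, ?_⟩ <;>
    · intro i j hij hni hnj
      have hij' := Fin.lt_def.mp hij
      rw [swap_val] at hni hnj
      rw [Fin.lt_def, swap_val, swap_val]
      split_ifs at hni hnj ⊢ <;> omega
end

section
/- For all integers a ≥ 1 and b ≥ 0 with a + b ≥ 2, the set of reverse complements of the partial shuffle Π(a,b) equals the partial shuffle Π(b+1, a−1); that is, (Π(a,b))^{rc} = Π(b+1, a−1). -/
/-- The reverse complement of a permutation: `π^{rc}_i = n + 1 - π_{n+1-i}`. -/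
def rcPerm {n : ℕ} (π : Equiv.Perm (Fin n)) : Equiv.Perm (Fin n) :=
  Fin.revPerm * π * Fin.revPerm

lemma rcPerm_apply {n : ℕ} (π : Equiv.Perm (Fin n)) (i : Fin n) :
    rcPerm π i = Fin.rev (π (Fin.rev i)) := rfl

lemma rcPerm_rcPerm {n : ℕ} (π : Equiv.Perm (Fin n)) : rcPerm (rcPerm π) = π := by
  ext i
  simp [rcPerm_apply]

lemma rc_dir (m c d : ℕ) (h : c + d = m + 1) (σ : Equiv.Perm (Fin m))
    (hσ : σ ∈ partialShuffle m c) : rcPerm σ ∈ partialShuffle m d := by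
  obtain ⟨h1, h2⟩ := hσ
  constructor
  · intro hrc
    apply h1
    have := congrArg rcPerm hrc
    rw [rcPerm_rcPerm] at this
    rw [this]
    ext i
    simp [rcPerm_apply]
  · intro i j hij hne1 hne2
    simp only [rcPerm_apply] at hne1 hne2 ⊢
    rw [Fin.rev_lt_rev]
    apply h2 _ _ (by rwa [Fin.rev_lt_rev])
    · have hb : (σ (Fin.rev j) : ℕ) < m := (σ (Fin.rev j)).isLt
      rw [Fin.val_rev] at hne2
      omega
    · have hb : (σ (Fin.rev i) : ℕ) < m := (σ (Fin.rev i)).isLt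
      rw [Fin.val_rev] at hne1
      omega

theorem rc_of_partialShuffle (a b : ℕ) (ha : 1 ≤ a) (hab : 2 ≤ a + b) :
    rcPerm '' partialShuffle (a + b) a = partialShuffle (a + b) (b + 1) := by
  ext τ
  constructor
  · rintro ⟨σ, hσ, rfl⟩
    exact rc_dir (a + b) a (b + 1) (by omega) σ hσ
  · intro hτ
    exact ⟨rcPerm τ, rc_dir (a + b) (b + 1) a (by omega) τ hτ, rcPerm_rcPerm τ⟩
end
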